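/- Let n ≥ 2 and let e_n = (0, …, 0, 1) ∈ ℝⁿ. The map Φ sending x to (1 - |x|², x₁/|x|, …, x_{n-1}/|x|) ∈ ℝ × ℝ^{n-1} is injective on the set {x ∈ ℝⁿ : |x| ≤ 1 and |x - e_n| < 1}, where |·| denotes the Euclidean norm. -/

import Mathlib

/-- Injectivity of the change of variables (4.1): for `n ≥ 2`, the map
`x ↦ (1 - |x|², x₁/|x|, …, x_{n-1}/|x|)` is injective on
`{x : |x| ≤ 1, |x - eₙ| < 1}` where `eₙ = (0, …, 0, 1)`. -/
theorem stmt_18 (n : ℕ) (hn : 2 ≤ n) :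
    Set.InjOn
      (fun x : EuclideanSpace ℝ (Fin n) =>
        ((1 - ‖x‖ ^ 2, fun i : Fin (n - 1) => x (Fin.castLE (Nat.sub_le n 1) i) / ‖x‖) :
          ℝ × (Fin (n - 1) → ℝ)))
      {x : EuclideanSpace ℝ (Fin n) |
        ‖x‖ ≤ 1 ∧ ‖x - EuclideanSpace.single (⟨n - 1, by omega⟩ : Fin n) (1 : ℝ)‖ < 1} := by
  have hlt : n - 1 < n := by omega
  set last : Fin n := ⟨n - 1, hlt⟩ with hlastdef
  -- key positivity fact
  have key : ∀ z : EuclideanSpace ℝ (Fin n),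
      ‖z - EuclideanSpace.single last (1 : ℝ)‖ < 1 → ‖z‖ ^ 2 < 2 * z last := by
    intro z hz
    have h1 : ‖z - EuclideanSpace.single last (1 : ℝ)‖ ^ 2 < 1 := by
      calc ‖z - EuclideanSpace.single last (1 : ℝ)‖ ^ 2
          < 1 ^ 2 := by
            apply pow_lt_pow_left₀ hz (norm_nonneg _); norm_num
        _ = 1 := one_pow 2
    have h2 : ‖z - EuclideanSpace.single last (1 : ℝ)‖ ^ 2
        = ‖z‖ ^ 2 - 2 * z last + 1 := by
      rw [norm_sub_sq_real]
      have hinner : (inner ℝ z (EuclideanSpace.single last (1 : ℝ)) : ℝ) = z last := by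
        rw [EuclideanSpace.inner_single_right]
        simp
      rw [hinner, EuclideanSpace.norm_single]
      norm_num
    rw [h2] at h1
    linarith
  intro x hx y hy h
  obtain ⟨hx1, hx2⟩ := hx
  obtain ⟨hy1, hy2⟩ := hy
  have hxk := key x hx2
  have hyk := key y hy2
  have hxlast : 0 < x last := by nlinarith [sq_nonneg ‖x‖]
  have hylast : 0 < y last := by nlinarith [sq_nonneg ‖y‖]
  have hxne : x ≠ 0 := by
    intro h0
    rw [h0] at hxlast
    simp at hxlast
  have hxnorm : (0 : ℝ) < ‖x‖ := norm_pos_iff.mpr hxne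
  have h1 : 1 - ‖x‖ ^ 2 = 1 - ‖y‖ ^ 2 := congrArg Prod.fst h
  have h2 := congrArg Prod.snd h
  simp only at h2
  have hsq : ‖x‖ ^ 2 = ‖y‖ ^ 2 := by linarith
  have hnorm : ‖x‖ = ‖y‖ := by
    nlinarith [norm_nonneg x, norm_nonneg y]
  have hcoord : ∀ i : Fin (n - 1),
      x (Fin.castLE (Nat.sub_le n 1) i) = y (Fin.castLE (Nat.sub_le n 1) i) := by
    intro i
    have := congrFun h2 i
    rw [← hnorm] at this
    field_simp at this
    exact this
  -- sums of squares
  have hsum : ∑ j : Fin n, x j ^ 2 = ∑ j : Fin n, y j ^ 2 := by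
    have hx' : ‖x‖ ^ 2 = ∑ j, x j ^ 2 := by
      rw [PiLp.norm_sq_eq_of_L2]
      simp [Real.norm_eq_abs, sq_abs]
    have hy' : ‖y‖ ^ 2 = ∑ j, y j ^ 2 := by
      rw [PiLp.norm_sq_eq_of_L2]
      simp [Real.norm_eq_abs, sq_abs]
    rw [← hx', ← hy', hsq]
  have hcoord' : ∀ j : Fin n, j ≠ last → x j = y j := by
    intro j hj
    have hjv : (j : ℕ) < n - 1 := by
      have := j.isLt
      rcases lt_or_ge (j : ℕ) (n - 1) with h' | h'
      · exact h'
      · exfalso; apply hj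
        rw [Fin.ext_iff, hlastdef]
        simp only []
        omega
    have : Fin.castLE (Nat.sub_le n 1) (⟨(j : ℕ), hjv⟩ : Fin (n - 1)) = j := by
      apply Fin.ext; rfl
    rw [← this]
    exact hcoord _
  have hsplit : ∀ z : EuclideanSpace ℝ (Fin n),
      ∑ j : Fin n, z j ^ 2
        = ∑ j ∈ Finset.univ.erase last, z j ^ 2 + z last ^ 2 := by
    intro z
    exact (Finset.sum_erase_add _ _ (Finset.mem_univ last)).symm
  have herase : ∑ j ∈ Finset.univ.erase last, x j ^ 2
      = ∑ j ∈ Finset.univ.erase last, y j ^ 2 := by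
    apply Finset.sum_congr rfl
    intro j hj
    rw [hcoord' j (Finset.ne_of_mem_erase hj)]
  have hlast2 : x last ^ 2 = y last ^ 2 := by
    have := hsum
    rw [hsplit x, hsplit y, herase] at this
    linarith
  have hlasteq : x last = y last := by nlinarith
  ext j
  by_cases hj : j = last
  · rw [hj]; exact hlasteq
  · exact hcoord' j hj
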